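/- (Lemma 3.2, set-theoretic form.) Let ℓ ⊂ ℙ²(𝕜) be the line defined by a·x₀ + b·x₁ + c·x₂ = 0, where (a,b,c) ≠ (0,0,0). Then the set-theoretic intersection of ℓ with the curve Δ_X = {σ(x₀,x₁) = x₂^p} consists of exactly one point if and only if c = 0, i.e. if and only if ℓ passes through the point str = [0:0:1]. (Thus the 𝔸¹-lines in X are precisely the lines through the strange point str.) -/

import Mathlib

open Finset

section AuxLemmas
open Polynomial

abbrev auxQ (p : ℕ) {k : Type*} [Field k] (s : ℕ → k) (a b c : k) (v : Fin 3 → k) : Prop :=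
  a * v 0 + b * v 1 + c * v 2 = 0 ∧
    (∑ i ∈ Ioo 0 p, s i * v 0 ^ i * v 1 ^ (p - i)) = v 2 ^ p

lemma aux_sum_homog {k : Type*} [CommRing k] (p : ℕ) (s : ℕ → k) (t x y : k) :
    (∑ i ∈ Ioo 0 p, s i * (t * x) ^ i * (t * y) ^ (p - i))
      = t ^ p * ∑ i ∈ Ioo 0 p, s i * x ^ i * y ^ (p - i) := by
  rw [Finset.mul_sum]
  refine Finset.sum_congr rfl fun i hi => ?_
  obtain ⟨h0, hlt⟩ := Finset.mem_Ioo.mp hi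
  calc s i * (t * x) ^ i * (t * y) ^ (p - i)
      = (t ^ i * t ^ (p - i)) * (s i * x ^ i * y ^ (p-i)) := by rw [mul_pow, mul_pow]; ring
    _ = t ^ p * (s i * x ^ i * y ^ (p - i)) := by rw [← pow_add, Nat.add_sub_cancel' hlt.le]

lemma auxQ_smul {k : Type*} [Field k] (p : ℕ) (s : ℕ → k) (a b c : k) (t : k)
    (v : Fin 3 → k) (h : auxQ p s a b c v) : auxQ p s a b c (t • v) := by
  obtain ⟨h1, h2⟩ := h
  constructor
  · simp only [Pi.smul_apply, smul_eq_mul]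
    calc a * (t * v 0) + b * (t * v 1) + c * (t * v 2)
        = t * (a * v 0 + b * v 1 + c * v 2) := by ring
      _ = 0 := by rw [h1, mul_zero]
  · simp only [Pi.smul_apply, smul_eq_mul]
    rw [aux_sum_homog, h2, mul_pow]

lemma auxQ_rep {k : Type*} [Field k] (p : ℕ) (s : ℕ → k) (a b c : k)
    (v : Fin 3 → k) (hv : v ≠ 0) (h : auxQ p s a b c v) :
    auxQ p s a b c ((Projectivization.mk k v hv).rep) := by
  obtain ⟨u, hu⟩ := Projectivization.exists_smul_eq_mk_rep k v hv
  rw [← hu, Units.smul_def]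
  exact auxQ_smul p s a b c (u : k) v h

lemma aux_two_roots {k : Type*} [Field k] [IsAlgClosed k] (p : ℕ) (hp : p.Prime) [CharP k p]
    (g : Polynomial k) (hdeg : g.natDegree = p) (hc : g.coeff 1 ≠ 0) :
    ∃ r₁ r₂ : k, r₁ ≠ r₂ ∧ g.IsRoot r₁ ∧ g.IsRoot r₂ := by
  haveI := Fact.mk hp
  have hg0 : g ≠ 0 := fun h => hc (by simp [h])
  have hsplit : g.Splits := IsAlgClosed.splits g
  have hcard : Multiset.card g.roots = p := by
    rw [← hdeg]; exact Polynomial.splits_iff_card_roots.mp hsplit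
  have hpos : 0 < Multiset.card g.roots := by rw [hcard]; exact hp.pos
  obtain ⟨r, hr⟩ := Multiset.card_pos_iff_exists_mem.mp hpos
  by_cases h2 : ∃ r' ∈ g.roots, r' ≠ r
  · obtain ⟨r', hr', hne⟩ := h2
    exact ⟨r', r, hne, Polynomial.isRoot_of_mem_roots hr', Polynomial.isRoot_of_mem_roots hr⟩
  · exfalso
    push_neg at h2
    have hrep : g.roots = Multiset.replicate p r := by
      rw [Multiset.eq_replicate]; exact ⟨hcard, fun x hx => h2 x hx⟩
    have hg : g = Polynomial.C g.leadingCoeff * (Polynomial.X - Polynomial.C r) ^ p := by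
      conv_lhs => rw [hsplit.eq_prod_roots, hrep]
      rw [Multiset.map_replicate, Multiset.prod_replicate]
    apply hc
    rw [hg, sub_pow_char, Polynomial.coeff_C_mul, Polynomial.coeff_sub,
      Polynomial.coeff_X_pow, ← Polynomial.C_pow, Polynomial.coeff_C]
    simp [hp.one_lt.ne]

noncomputable def auxG (p : ℕ) {k : Type*} [Field k] (s : ℕ → k) (a b c : k) : Polynomial k :=
  Polynomial.C (c ^ p) * (∑ i ∈ Ioo 0 p, Polynomial.C (s i) * Polynomial.X ^ i)
    + Polynomial.C (-(-1 : k) ^ p * a ^ p) * Polynomial.X ^ p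
    + Polynomial.C (-(-1 : k) ^ p * b ^ p)

lemma auxG_coeff (p : ℕ) {k : Type*} [Field k] (s : ℕ → k) (a b c : k) (n : ℕ) :
    (auxG p s a b c).coeff n =
      c ^ p * (if n ∈ Ioo 0 p then s n else 0)
        + (-(-1 : k) ^ p * a ^ p) * (if n = p then 1 else 0)
        + (-(-1 : k) ^ p * b ^ p) * (if n = 0 then 1 else 0) := by
  simp only [auxG, Polynomial.coeff_add, Polynomial.coeff_C_mul, Polynomial.finset_sum_coeff,
    Polynomial.coeff_X_pow, Polynomial.coeff_C, Polynomial.mul_coeff_one]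
  congr 2
  · rw [Finset.mul_sum]
    have hcong : ∀ i ∈ Ioo 0 p, c ^ p * (s i * if n = i then (1:k) else 0)
        = if i = n then c ^ p * s i else 0 := by
      intro i _
      by_cases h : i = n
      · simp [h]
      · simp [h, Ne.symm h]
    rw [Finset.sum_congr rfl hcong, Finset.sum_ite_eq' (Ioo 0 p) n (fun i => c ^ p * s i)]
    by_cases h : n ∈ Ioo 0 p <;> simp [h]
  · by_cases h : n = p <;> simp [h]

lemma auxG_eval (p : ℕ) {k : Type*} [Field k] (s : ℕ → k) (a b c : k) (t : k) :
    (auxG p s a b c).eval t =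
      c ^ p * (∑ i ∈ Ioo 0 p, s i * t ^ i)
        + (-(-1 : k) ^ p * a ^ p) * t ^ p + -(-1 : k) ^ p * b ^ p := by
  simp [auxG, Polynomial.eval_finset_sum, Finset.mul_sum]

end AuxLemmas

/-- **Lemma 3.2, set-theoretic form.**  Let `p` be a prime, `𝕜` an
algebraically closed field of characteristic `p`, and `σ(A,B) = ∑_{i=1}^{p-1} σ_i A^i B^{p-i}`
with `σ_1 = σ_{p-1} = 1`.  Let `ℓ ⊂ ℙ²(𝕜)` be the line `a·x₀ + b·x₁ + c·x₂ = 0` with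
`(a,b,c) ≠ (0,0,0)`.  Then `ℓ` meets the curve `Δ_X = {σ(x₀,x₁) = x₂^p}` in exactly one
point if and only if `c = 0`, i.e. iff `ℓ` passes through the strange point `[0:0:1]`. -/
theorem line_meets_boundary_in_one_point_iff_through_strange_point
    (p : ℕ) (hp : p.Prime) (𝕜 : Type*) [Field 𝕜] [IsAlgClosed 𝕜] [CharP 𝕜 p]
    (s : ℕ → 𝕜) (hs1 : s 1 = 1) (hsp : s (p - 1) = 1)
    (a b c : 𝕜) (habc : (a, b, c) ≠ (0, 0, 0)) :
    (∃! P : Projectivization 𝕜 (Fin 3 → 𝕜),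
        a * P.rep 0 + b * P.rep 1 + c * P.rep 2 = 0 ∧
        (∑ i ∈ Ioo 0 p, s i * P.rep 0 ^ i * P.rep 1 ^ (p - i)) = P.rep 2 ^ p)
      ↔ c = 0 := by
  haveI := Fact.mk hp
  have hp0 : p ≠ 0 := hp.ne_zero
  have h1p : (1 : ℕ) ∈ Ioo 0 p := Finset.mem_Ioo.mpr ⟨Nat.one_pos, hp.one_lt⟩
  constructor
  · -- ∃! → c = 0
    intro hEU
    by_contra hc
    have hcp : c ^ p ≠ 0 := pow_ne_zero _ hc
    -- from a root of auxG build a point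
    have key : ∀ t : 𝕜, (auxG p s a b c).IsRoot t →
        auxQ p s a b c ![t, 1, -(a * t + b) / c] := by
      intro t ht
      have ht' : (auxG p s a b c).eval t = 0 := ht
      rw [auxG_eval] at ht'
      constructor
      · show a * t + b * 1 + c * (-(a * t + b) / c) = 0
        field_simp
        ring
      · show (∑ i ∈ Ioo 0 p, s i * t ^ i * (1 : 𝕜) ^ (p - i)) = (-(a * t + b) / c) ^ p
        have hsum : (∑ i ∈ Ioo 0 p, s i * t ^ i * (1 : 𝕜) ^ (p - i))
            = ∑ i ∈ Ioo 0 p, s i * t ^ i :=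
          Finset.sum_congr rfl fun i _ => by rw [one_pow, mul_one]
        have hz : (-(a * t + b) / c) ^ p = ((-1 : 𝕜) ^ p * (a ^ p * t ^ p + b ^ p)) / c ^ p := by
          rw [div_pow, neg_eq_neg_one_mul (a * t + b), mul_pow, add_pow_char, mul_pow]
        rw [hsum, hz, eq_div_iff hcp]
        linear_combination ht'
    have hc1 : (auxG p s a b c).coeff 1 = c ^ p := by
      rw [auxG_coeff]
      simp [h1p, hp.one_lt.ne, hs1]
    -- two distinct points on the line and curve
    obtain ⟨v₁, v₂, hv₁, hv₂, hQ1, hQ2, hnp⟩ :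
        ∃ v₁ v₂ : Fin 3 → 𝕜, v₁ ≠ 0 ∧ v₂ ≠ 0 ∧ auxQ p s a b c v₁ ∧ auxQ p s a b c v₂ ∧
          ∀ m : 𝕜, m • v₂ ≠ v₁ := by
      by_cases ha : a = 0
      · -- first point [1:0:0]
        have hQa : auxQ p s a b c ![1, 0, 0] := by
          constructor
          · show a * 1 + b * 0 + c * 0 = 0
            rw [ha]; ring
          · show (∑ i ∈ Ioo 0 p, s i * (1:𝕜) ^ i * (0:𝕜) ^ (p - i)) = (0:𝕜) ^ p
            rw [zero_pow hp0]
            refine Finset.sum_eq_zero fun i hi => ?_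
            rw [zero_pow (Nat.sub_ne_zero_of_lt (Finset.mem_Ioo.mp hi).2), mul_zero]
        have hg0 : auxG p s a b c ≠ 0 := fun h => hcp (by rw [← hc1, h, Polynomial.coeff_zero])
        have hdpos : 0 < (auxG p s a b c).natDegree :=
          lt_of_lt_of_le Nat.one_pos (Polynomial.le_natDegree_of_ne_zero (by rw [hc1]; exact hcp))
        obtain ⟨t₀, ht₀⟩ := IsAlgClosed.exists_root (auxG p s a b c)
          (Polynomial.natDegree_pos_iff_degree_pos.mp hdpos).ne'
        refine ⟨![1, 0, 0], ![t₀, 1, -(a * t₀ + b) / c], ?_, ?_, hQa, key t₀ ht₀, ?_⟩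
        · exact fun h => one_ne_zero (congrFun h 0)
        · exact fun h => one_ne_zero (congrFun h 1)
        · intro m hm
          have h1 : m * 1 = 0 := congrFun hm 1
          have h0 : m * t₀ = 1 := congrFun hm 0
          rw [mul_one] at h1
          rw [h1, zero_mul] at h0
          exact zero_ne_one h0
      · -- natDegree = p, two distinct roots
        have hcp' : (auxG p s a b c).coeff p = -(-1 : 𝕜) ^ p * a ^ p := by
          rw [auxG_coeff]
          simp [hp0]
        have hcpne : (auxG p s a b c).coeff p ≠ 0 := by
          rw [hcp']
          exact mul_ne_zero (neg_ne_zero.mpr (pow_ne_zero _ (neg_ne_zero.mpr one_ne_zero)))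
            (pow_ne_zero _ ha)
        have hdeg : (auxG p s a b c).natDegree = p := by
          refine le_antisymm (Polynomial.natDegree_le_iff_coeff_eq_zero.mpr fun N hN => ?_)
            (Polynomial.le_natDegree_of_ne_zero hcpne)
          rw [auxG_coeff]
          have h1 : N ∉ Ioo 0 p := fun h => absurd (Finset.mem_Ioo.mp h).2 (not_lt.mpr hN.le)
          have h2 : N ≠ p := hN.ne'
          have h3 : N ≠ 0 := (lt_trans hp.pos hN).ne'
          simp [h1, h2, h3]
        obtain ⟨r₁, r₂, hr, hroot₁, hroot₂⟩ := aux_two_roots p hp _ hdeg (by rw [hc1]; exact hcp)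
        refine ⟨![r₁, 1, -(a * r₁ + b) / c], ![r₂, 1, -(a * r₂ + b) / c],
          fun h => one_ne_zero (congrFun h 1), fun h => one_ne_zero (congrFun h 1),
          key r₁ hroot₁, key r₂ hroot₂, ?_⟩
        intro m hm
        have h1 : m * 1 = 1 := congrFun hm 1
        have h0 : m * r₂ = r₁ := congrFun hm 0
        rw [mul_one] at h1
        rw [h1, one_mul] at h0
        exact hr h0.symm
    have e := hEU.unique (auxQ_rep p s a b c v₁ hv₁ hQ1) (auxQ_rep p s a b c v₂ hv₂ hQ2)
    obtain ⟨m, hm⟩ := (Projectivization.mk_eq_mk_iff' 𝕜 v₁ v₂ hv₁ hv₂).mp e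
    exact hnp m hm
  · -- c = 0 → ∃!
    intro hc
    subst hc
    have hab : ¬(a = 0 ∧ b = 0) := fun ⟨h1', h2'⟩ => habc (by rw [h1', h2'])
    obtain ⟨l, hl⟩ := IsAlgClosed.exists_pow_nat_eq
      (∑ i ∈ Ioo 0 p, s i * b ^ i * (-a) ^ (p - i)) hp.pos
    have hv : (![b, -a, l] : Fin 3 → 𝕜) ≠ 0 := by
      intro h
      exact hab ⟨by simpa using congrFun h 1, congrFun h 0⟩
    have hQv : auxQ p s a b 0 ![b, -a, l] := by
      constructor
      · show a * b + b * (-a) + 0 * l = 0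
        ring
      · exact hl.symm
    refine ⟨Projectivization.mk 𝕜 ![b, -a, l] hv, auxQ_rep p s a b 0 _ hv hQv, ?_⟩
    rintro P' ⟨h1, h2⟩
    have hex : ∃ t : 𝕜, P'.rep 0 = t * b ∧ P'.rep 1 = t * (-a) := by
      by_cases haz : a = 0
      · have hbz : b ≠ 0 := fun h => hab ⟨haz, h⟩
        refine ⟨P'.rep 0 / b, by field_simp, ?_⟩
        have hb1 : b * P'.rep 1 = 0 := by
          rw [haz] at h1; linear_combination h1
        rw [haz, (mul_eq_zero.mp hb1).resolve_left hbz]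
        ring
      · refine ⟨-(P'.rep 1) / a, ?_, by field_simp⟩
        field_simp
        ring
        linear_combination h1
    obtain ⟨t, ht0, ht1⟩ := hex
    by_cases htz : t = 0
    · exfalso
      rw [htz, zero_mul] at ht0 ht1
      have hsum0 : (∑ i ∈ Ioo 0 p, s i * P'.rep 0 ^ i * P'.rep 1 ^ (p - i)) = 0 := by
        refine Finset.sum_eq_zero fun i hi => ?_
        rw [ht0, zero_pow (Finset.mem_Ioo.mp hi).1.ne', mul_zero, zero_mul]
      rw [hsum0] at h2
      have hw2 : P'.rep 2 = 0 := pow_eq_zero_iff hp0 |>.mp h2.symm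
      apply P'.rep_nonzero
      funext i
      fin_cases i
      · exact ht0
      · exact ht1
      · exact hw2
    · have hw2 : P'.rep 2 = t * l := by
        have hps : P'.rep 2 ^ p = (t * l) ^ p := by
          rw [← h2, ht0, ht1, mul_pow, hl]
          exact aux_sum_homog p s t b (-a)
        have hsub : (P'.rep 2 - t * l) ^ p = 0 := by rw [sub_pow_char, hps, sub_self]
        have := pow_eq_zero_iff hp0 |>.mp hsub
        exact sub_eq_zero.mp this
      have hwv : P'.rep = t • ![b, -a, l] := by
        funext i
        fin_cases i
        · simpa using ht0
        · simpa using ht1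
        · simpa using hw2
      rw [← Projectivization.mk_rep P']
      refine (Projectivization.mk_eq_mk_iff 𝕜 _ _ _ hv).mpr ⟨Units.mk0 t htz, ?_⟩
      rw [Units.smul_def]
      exact hwv.symm
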